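/- Let N ≥ 2 and k ≥ 1 be integers and let a ∈ ℤ/N, with (N,k,a) ≠ (2,2,1). Then there exists a function f : ℤ/N → ℕ with ∑_{i ∈ ℤ/N} f(i) = k, with ∑_{i ∈ ℤ/N} i·f(i) = a in ℤ/N, and such that f has trivial rotation stabiliser: for every j ∈ ℤ/N, if f(i − j) = f(i) for all i ∈ ℤ/N, then j = 0. -/

import Mathlib

open Finset

section helpers
variable {N : ℕ} [NeZero N]

lemma sum_pair' (b c : ZMod N) (v w : ℕ) :
    ∑ i : ZMod N, ((if i = b then v else 0) + (if i = c then w else 0)) = v + w := by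
  rw [Finset.sum_add_distrib]
  simp

lemma wsum_pair' (b c : ZMod N) (v w : ℕ) :
    ∑ i : ZMod N, i * ((((if i = b then v else 0) + (if i = c then w else 0) : ℕ)) : ZMod N)
      = b * v + c * w := by
  have : ∀ i : ZMod N,
      i * ((((if i = b then v else 0) + (if i = c then w else 0) : ℕ)) : ZMod N)
      = (if i = b then i * (v:ZMod N) else 0) + (if i = c then i * (w:ZMod N) else 0) := by
    intro i
    push_cast
    rw [mul_add]
    congr 1 <;> split <;> simp
  rw [Finset.sum_congr rfl fun i _ => this i, Finset.sum_add_distrib]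
  simp

end helpers

theorem exists_weight_trivial_cyclic_stabiliser (N k : ℕ) [NeZero N] (hN : 2 ≤ N)
    (hk : 1 ≤ k) (a : ZMod N) (hexc : ¬(N = 2 ∧ k = 2 ∧ a = 1)) :
    ∃ f : ZMod N → ℕ,
      (∑ i : ZMod N, f i = k) ∧
      (∑ i : ZMod N, i * (f i : ZMod N) = a) ∧
      (∀ j : ZMod N, (∀ i : ZMod N, f (i - j) = f i) → j = 0) := by
  classical
  -- singleton helper
  have singleton : ∀ b : ZMod N, b * k = a →
      ∃ f : ZMod N → ℕ,
      (∑ i : ZMod N, f i = k) ∧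
      (∑ i : ZMod N, i * (f i : ZMod N) = a) ∧
      (∀ j : ZMod N, (∀ i : ZMod N, f (i - j) = f i) → j = 0) := by
    intro b hb
    refine ⟨fun i => if i = b then k else 0, by simp, ?_, ?_⟩
    · calc ∑ i : ZMod N, i * (((if i = b then k else 0 : ℕ)) : ZMod N)
          = ∑ i : ZMod N, (if i = b then i * (k:ZMod N) else 0) := by
            apply Finset.sum_congr rfl; intro i _; split <;> simp
      _ = b * k := by simp
      _ = a := hb
    · intro j hj
      have h := hj b
      simp only [if_pos rfl] at h
      by_contra hj0
      rw [if_neg] at h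
      · exact Nat.one_le_iff_ne_zero.mp hk h.symm
      · intro hbb
        exact hj0 (by rwa [sub_eq_self] at hbb)
  -- pair with equal weights 1,1 (k = 2 case)
  have pair11 : k = 2 → ∀ b c : ZMod N, b ≠ c → 2 * (b - c) ≠ 0 → b + c = a →
      ∃ f : ZMod N → ℕ,
      (∑ i : ZMod N, f i = k) ∧
      (∑ i : ZMod N, i * (f i : ZMod N) = a) ∧
      (∀ j : ZMod N, (∀ i : ZMod N, f (i - j) = f i) → j = 0) := by
    intro hk2 b c hbc h2 hsum
    refine ⟨fun i => (if i = b then 1 else 0) + (if i = c then 1 else 0),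
      by rw [sum_pair']; omega, ?_, ?_⟩
    · rw [wsum_pair']
      push_cast
      rw [mul_one, mul_one, hsum]
    · intro j hj
      by_contra hj0
      have hb : (if b - j = b then 1 else 0) + (if b - j = c then 1 else 0) = 1 := by
        simpa [hbc] using hj b
      have hbj : b - j = b ∨ b - j = c := by
        by_contra hcon
        push_neg at hcon
        rw [if_neg hcon.1, if_neg hcon.2] at hb
        simp at hb
      rcases hbj with h1 | h1
      · exact hj0 (by rwa [sub_eq_self] at h1)
      · have hjval : j = b - c := by rw [← h1]; ring
        have hc : (if c - j = b then 1 else 0) + (if c - j = c then 1 else 0) = 1 := by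
          simpa [Ne.symm hbc] using hj c
        have hcj : c - j = b ∨ c - j = c := by
          by_contra hcon
          push_neg at hcon
          rw [if_neg hcon.1, if_neg hcon.2] at hc
          simp at hc
        rcases hcj with h2' | h2'
        · apply h2
          have : c - (b - c) = b := by rwa [hjval] at h2'
          have : 2 * (c - b) = 0 := by
            have := this
            linear_combination this
          linear_combination -this
        · apply hbc
          rw [hjval] at h2'
          linear_combination -h2'
  -- pair with weights (k-1, 1), k ≥ 3
  have pairK : 3 ≤ k → ∀ b c : ZMod N, b ≠ c → b * (k - 1 : ℕ) + c = a →
      ∃ f : ZMod N → ℕ,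
      (∑ i : ZMod N, f i = k) ∧
      (∑ i : ZMod N, i * (f i : ZMod N) = a) ∧
      (∀ j : ZMod N, (∀ i : ZMod N, f (i - j) = f i) → j = 0) := by
    intro hk3 b c hbc hsum
    refine ⟨fun i => (if i = b then k - 1 else 0) + (if i = c then 1 else 0),
      by rw [sum_pair']; omega, ?_, ?_⟩
    · rw [wsum_pair']
      push_cast
      rw [mul_one]
      push_cast at hsum
      exact hsum
    · intro j hj
      by_contra hj0
      have hb : (if b - j = b then k - 1 else 0) + (if b - j = c then 1 else 0) = k - 1 := by
        simpa [hbc] using hj b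
      have : b - j = b := by
        by_contra hne
        rw [if_neg hne] at hb
        split at hb <;> omega
      exact hj0 (by rwa [sub_eq_self] at this)
  -- main case split
  by_cases ha : a = 0
  · exact singleton 0 (by simp [ha])
  rcases eq_or_lt_of_le hk with hk1 | hk2
  · -- k = 1
    exact singleton a (by rw [← hk1]; simp)
  rcases eq_or_lt_of_le (show 2 ≤ k from hk2) with hk2' | hk3
  · -- k = 2
    have hk2'' : k = 2 := hk2'.symm
    by_cases h2a : 2 * a = 0
    · by_cases hsq : ∃ c : ZMod N, c * 2 = a
      · obtain ⟨c, hc⟩ := hsq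
        exact singleton c (by rw [hk2'']; exact_mod_cast hc)
      · -- pair {1, a-1}
        push_neg at hsq
        have ha2 : a ≠ 2 := by
          intro h
          exact hsq 1 (by rw [h]; ring)
        have h4 : (4 : ZMod N) ≠ 0 := by
          intro h4'
          have hd : N ∣ 4 := by
            have : ((4:ℕ) : ZMod N) = 0 := by exact_mod_cast h4'
            exact (ZMod.natCast_eq_zero_iff 4 N).mp this
          have h4le : N ≤ 4 := Nat.le_of_dvd (by norm_num) hd
          interval_cases N
          · -- N = 2
            apply hexc
            refine ⟨rfl, hk2'', ?_⟩
            fin_cases a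
            · exact absurd rfl ha
            · rfl
          · -- N = 3
            omega
          · -- N = 4
            have ha4 : a = 2 := by
              fin_cases a
              · exact absurd rfl ha
              · exact absurd h2a (by decide)
              · rfl
              · exact absurd h2a (by decide)
            exact ha2 ha4
        refine pair11 hk2'' 1 (a - 1) ?_ ?_ (by ring)
        · intro h
          exact ha2 (by linear_combination -h)
        · intro h
          apply h4
          have : 2 * (1 - (a - 1)) = 4 - 2 * a := by ring
          rw [this, h2a, sub_zero] at h
          exact h
    · -- 2a ≠ 0 : pair {0, a}
      refine pair11 hk2'' 0 a (by simpa using (Ne.symm ha)) ?_ (by ring)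
      intro h
      apply h2a
      have : 2 * (0 - a) = -(2 * a) := by ring
      rw [this] at h
      exact neg_eq_zero.mp h
  · -- k ≥ 3
    exact pairK hk3 0 a (Ne.symm ha) (by simp)
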